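/- For all real x not in πℤ, the series ∑_{j=1}^∞ (−1)^j/((πj)² − x²) converges and equals (1/2)(1/x² − 1/(x sin x)). -/

import Mathlib

open Real MeasureTheory intervalIntegral

lemma exp_int_aux (c : ℝ) (hc : c ≠ 0) :
    (∫ t in (-π)..π, Complex.exp (Complex.I * c * t)) = 2 * Real.sin (c * π) / c := by
  have hc' : (Complex.I * c : ℂ) ≠ 0 :=
    mul_ne_zero Complex.I_ne_zero (Complex.ofReal_ne_zero.mpr hc)
  rw [integral_exp_mul_complex hc']
  rw [show (Complex.I * c * (π : ℝ) : ℂ) = ((c * π : ℝ) : ℂ) * Complex.I by push_cast; ring,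
      show (Complex.I * c * ((-π : ℝ) : ℂ) : ℂ) = (-((c * π : ℝ) : ℂ)) * Complex.I by
        push_cast; ring]
  rw [Complex.exp_mul_I, Complex.exp_mul_I, Complex.cos_neg, Complex.sin_neg,
    ← Complex.ofReal_sin, ← Complex.ofReal_cos]
  have hcc : (c : ℂ) ≠ 0 := Complex.ofReal_ne_zero.mpr hc
  field_simp
  ring

lemma cos_int_aux (a : ℝ) (n : ℤ) (h1 : a - n ≠ 0) (h2 : a + n ≠ 0) :
    (∫ t in (-π)..π, Complex.exp (-(Complex.I * n * t)) * Complex.cos (a * t))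
      = (((-1) ^ n * Real.sin (a * π) * (2 * a) / (a ^ 2 - (n : ℝ) ^ 2) : ℝ) : ℂ) := by
  have key : ∀ t : ℝ, Complex.exp (-(Complex.I * n * t)) * Complex.cos ((a : ℂ) * t)
      = (Complex.exp (Complex.I * ((a - n : ℝ) : ℂ) * t)
          + Complex.exp (Complex.I * ((-(a + n) : ℝ) : ℂ) * t)) / 2 := by
    intro t
    rw [Complex.cos, ← mul_div_assoc, mul_add, ← Complex.exp_add, ← Complex.exp_add,
      show -(Complex.I * n * t) + (a : ℂ) * t * Complex.I
        = Complex.I * ((a - n : ℝ) : ℂ) * t by push_cast; ring,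
      show -(Complex.I * n * t) + -((a : ℂ) * t) * Complex.I
        = Complex.I * ((-(a + n) : ℝ) : ℂ) * t by push_cast; ring]
  rw [intervalIntegral.integral_congr (g := fun t : ℝ =>
      (Complex.exp (Complex.I * ((a - n : ℝ) : ℂ) * t)
        + Complex.exp (Complex.I * ((-(a + n) : ℝ) : ℂ) * t)) / 2)
    (fun t _ => key t)]
  have i1 : IntervalIntegrable (fun t : ℝ => Complex.exp (Complex.I * ((a - n : ℝ) : ℂ) * t))
      volume (-π) π := (Continuous.intervalIntegrable (by fun_prop) _ _)
  have i2 : IntervalIntegrable (fun t : ℝ => Complex.exp (Complex.I * ((-(a + n) : ℝ) : ℂ) * t))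
      volume (-π) π := (Continuous.intervalIntegrable (by fun_prop) _ _)
  rw [intervalIntegral.integral_div, intervalIntegral.integral_add i1 i2,
    exp_int_aux _ h1, exp_int_aux _ (neg_ne_zero.mpr h2)]
  have e1 : Real.sin ((a - n) * π) = (-1) ^ n * Real.sin (a * π) := by
    rw [show (a - n) * π = a * π - n * π by ring, Real.sin_sub_int_mul_pi]
  have e2 : Real.sin (-(a + n) * π) = -((-1) ^ n * Real.sin (a * π)) := by
    rw [show -(a + n) * π = -(a * π + n * π) by ring, Real.sin_neg, Real.sin_add_int_mul_pi]
  rw [e1, e2]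
  have h3 : (a : ℝ) ^ 2 - (n : ℝ) ^ 2 ≠ 0 := by
    have : a ^ 2 - (n:ℝ) ^ 2 = (a - n) * (a + n) := by ring
    rw [this]; exact mul_ne_zero h1 h2
  have h4 : -(a + (n:ℝ)) ≠ 0 := neg_ne_zero.mpr h2
  have goal_real : 2 * ((-1:ℝ)^n * Real.sin (a*π))/(a - n)
      + 2 * (-((-1:ℝ)^n * Real.sin (a*π)))/(-(a+n))
      = (-1)^n * Real.sin (a*π) * (2*a)/(a^2 - (n:ℝ)^2) * 2 := by
    rw [show 2 * (-((-1:ℝ)^n * Real.sin (a*π))) = -(2*((-1:ℝ)^n * Real.sin (a*π))) by ring,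
      neg_div_neg_eq]
    field_simp
    ring
  rw [div_eq_iff (two_ne_zero' ℂ)]
  exact_mod_cast goal_real

lemma neg_one_zpow_neg' (n : ℤ) : ((-1 : ℝ)) ^ (-n) = (-1) ^ n := by
  rcases Int.even_or_odd n with h | h
  · rw [h.neg_one_zpow, (h.neg : Even (-n)).neg_one_zpow]
  · rw [h.neg_one_zpow, (h.neg : Odd (-n)).neg_one_zpow]

lemma neg_one_zpow_abs' (n : ℤ) : |((-1 : ℝ)) ^ n| = 1 := by
  rcases Int.even_or_odd n with h | h
  · rw [h.neg_one_zpow]; norm_num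
  · rw [h.neg_one_zpow]; norm_num

theorem sum_alt_inv_pi_sq_sub_sq (x : ℝ) (hx : ∀ n : ℤ, x ≠ π * n) :
    HasSum (fun j : ℕ => (-1 : ℝ) ^ (j + 1) / ((π * (j + 1 : ℕ)) ^ 2 - x ^ 2))
      ((1 / 2) * (1 / x ^ 2 - 1 / (x * Real.sin x))) := by
  have hπ : (π : ℝ) ≠ 0 := Real.pi_ne_zero
  have hx0 : x ≠ 0 := by simpa using hx 0
  have hsin : Real.sin x ≠ 0 := by
    rw [Real.sin_ne_zero_iff]
    intro n h
    exact hx n (by rw [← h]; ring)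
  set a : ℝ := x / π with ha_def
  have hax : a * π = x := div_mul_cancel₀ x hπ
  have h1 : ∀ n : ℤ, a - n ≠ 0 := by
    intro n h
    apply hx n
    have : a = n := by linarith
    rw [← hax, this]; ring
  have h2 : ∀ n : ℤ, a + n ≠ 0 := by
    intro n h
    apply hx (-n)
    have : a = -n := by linarith
    rw [← hax, this]; push_cast; ring
  have h3 : ∀ n : ℤ, a ^ 2 - (n : ℝ) ^ 2 ≠ 0 := by
    intro n
    rw [show a ^ 2 - (n:ℝ)^2 = (a - n) * (a + n) by ring]
    exact mul_ne_zero (h1 n) (h2 n)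
  have hden : ∀ n : ℤ, x ^ 2 - (π * n) ^ 2 ≠ 0 := by
    intro n
    rw [show x ^ 2 - (π * n)^2 = ((a - n) * (a + n)) * π^2 by rw [← hax]; ring]
    exact mul_ne_zero (mul_ne_zero (h1 n) (h2 n)) (pow_ne_zero 2 hπ)
  haveI : Fact (0 < 2 * π) := ⟨by positivity⟩
  have hcont : Continuous (AddCircle.liftIco (2*π) (-π) (fun t : ℝ => Complex.cos (a * t))) := by
    apply AddCircle.liftIco_continuous
    · show Complex.cos ((a : ℂ) * ((-π : ℝ) : ℂ)) = Complex.cos ((a:ℂ) * ((-π + 2*π : ℝ) : ℂ))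
      rw [show (-π + 2*π : ℝ) = π by ring]
      push_cast
      rw [mul_neg, Complex.cos_neg]
    · exact Continuous.continuousOn (by fun_prop)
  set F : C(AddCircle (2*π), ℂ) := ⟨_, hcont⟩ with hF
  set c : ℤ → ℝ := fun n => (-1) ^ n * x * Real.sin x / (x ^ 2 - (π * n) ^ 2) with hc
  have hcoeff : ∀ n : ℤ, fourierCoeff (⇑F) n = ((c n : ℝ) : ℂ) := by
    intro n
    rw [show (⇑F) = AddCircle.liftIco (2*π) (-π) (fun t : ℝ => Complex.cos (a * t)) from rfl]
    rw [fourierCoeff_eq_intervalIntegral _ n (-π), show -π + 2*π = π by ring]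
    have hstep : (∫ t in (-π)..π, (fourier (-n) (t : AddCircle (2*π)) : ℂ) •
        AddCircle.liftIco (2*π) (-π) (fun t : ℝ => Complex.cos (a * t)) (t : AddCircle (2*π)))
        = ∫ t in (-π)..π, Complex.exp (-(Complex.I * n * t)) * Complex.cos (a * t) := by
      apply intervalIntegral.integral_congr_ae
      have hae : ∀ᵐ t : ℝ, t ≠ π := by
        rw [MeasureTheory.ae_iff]
        simpa using MeasureTheory.measure_singleton (π : ℝ)
      filter_upwards [hae] with t ht htmem
      rw [Set.uIoc_of_le (by linarith [Real.pi_pos] : -π ≤ π)] at htmem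
      have htI : t ∈ Set.Ico (-π) (-π + 2*π) := by
        constructor
        · exact le_of_lt htmem.1
        · rw [show -π + 2*π = π by ring]; exact lt_of_le_of_ne htmem.2 ht
      rw [AddCircle.liftIco_coe_apply htI, fourier_coe_apply, smul_eq_mul]
      congr 2
      have hπc : ((π:ℝ) : ℂ) ≠ 0 := Complex.ofReal_ne_zero.mpr hπ
      push_cast
      field_simp
    rw [hstep, cos_int_aux a n (h1 n) (h2 n)]
    rw [Complex.real_smul, ← Complex.ofReal_mul]
    congr 1
    simp only [hc]
    rw [← hax,
      show (a*π)^2 - (π*(n:ℝ))^2 = (a^2 - (n:ℝ)^2) * π^2 by ring]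
    have := h3 n
    field_simp
  have hπ2 : (1:ℝ) < π ^ 2 := by nlinarith [Real.pi_gt_three]
  have hbound : ∀ m : ℕ, |x| ≤ (m:ℝ) →
      |c m| ≤ |x * Real.sin x| / (π^2 - 1) * (1 / (m:ℝ)^2) := by
    intro m hm
    have hm0 : (0:ℝ) < m := lt_of_lt_of_le (abs_pos.mpr hx0) hm
    have hx2 : x^2 ≤ (m:ℝ)^2 := by nlinarith [abs_nonneg x, sq_abs x]
    have hDval : |x^2 - (π * ((m:ℤ):ℝ))^2| = (π * (m:ℝ))^2 - x^2 := by
      push_cast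
      rw [abs_of_nonpos (by nlinarith)]
      ring
    have hdenlow : (π^2 - 1) * (m:ℝ)^2 ≤ |x^2 - (π * ((m:ℤ):ℝ))^2| := by
      rw [hDval]; nlinarith
    simp only [hc]
    rw [abs_div, abs_mul, abs_mul, neg_one_zpow_abs', one_mul]
    calc |x| * |Real.sin x| / |x^2 - (π * ((m:ℤ):ℝ))^2|
        ≤ |x| * |Real.sin x| / ((π^2 - 1) * (m:ℝ)^2) := by
          gcongr
      _ = |x * Real.sin x| / (π^2 - 1) * (1 / (m:ℝ)^2) := by
          rw [abs_mul, mul_one_div, div_div]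
  have hsumnat : Summable (fun m : ℕ => c m) := by
    apply Summable.of_norm_bounded_eventually_nat
      (g := fun m : ℕ => |x * Real.sin x| / (π^2 - 1) * (1 / (m:ℝ)^2))
      ((Real.summable_one_div_nat_pow.mpr one_lt_two).mul_left _)
    filter_upwards [Filter.eventually_ge_atTop (⌈|x|⌉₊)] with m hm
    exact hbound m (le_trans (Nat.le_ceil _) (by exact_mod_cast hm))
  have heven : ∀ n : ℤ, c (-n) = c n := by
    intro n
    simp only [hc]
    rw [neg_one_zpow_neg']
    push_cast
    ring
  have hsum_int : Summable c :=
    Summable.of_nat_of_neg hsumnat (hsumnat.congr (fun m => (heven m).symm))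
  have hsumF : Summable (fourierCoeff (⇑F)) := by
    rw [funext hcoeff]
    exact Complex.summable_ofReal.mpr hsum_int
  have H := has_pointwise_sum_fourier_series_of_summable hsumF (0 : AddCircle (2*π))
  have hF0 : F (0 : AddCircle (2*π)) = 1 := by
    rw [show F (0 : AddCircle (2*π)) = AddCircle.liftIco (2*π) (-π)
      (fun t : ℝ => Complex.cos (a*t)) (((0:ℝ) : AddCircle (2*π))) from rfl]
    rw [AddCircle.liftIco_coe_apply
      (by constructor <;> · simp; linarith [Real.pi_pos] : (0:ℝ) ∈ Set.Ico (-π) (-π + 2*π))]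
    simp
  simp only [fourier_eval_zero, smul_eq_mul, mul_one, hcoeff, hF0] at H
  rw [show (1:ℂ) = ((1:ℝ):ℂ) by norm_num] at H
  have HR : HasSum c 1 := Complex.hasSum_ofReal.mp H
  have H2 := HR.nat_add_neg
  rw [show (fun m : ℕ => c m + c (-(m:ℤ))) = (fun m : ℕ => 2 * c m) from
    funext (fun m => by rw [heven]; ring)] at H2
  have H3 := (hasSum_nat_add_iff' (f := fun m : ℕ => 2 * c m) 1).mpr H2
  have hc0 : c 0 = Real.sin x / x := by
    simp only [hc]
    push_cast
    rw [zpow_zero]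
    field_simp
    ring
  rw [show ((1 + c 0) - ∑ i ∈ Finset.range 1, 2 * c i) = 1 - c 0 by
    rw [Finset.sum_range_one]; push_cast; ring] at H3
  set k : ℝ := -(1/(2*x*Real.sin x)) with hk
  have H4 := H3.mul_left k
  have hfun : (fun j : ℕ => (-1 : ℝ) ^ (j + 1) / ((π * (j + 1 : ℕ)) ^ 2 - x ^ 2))
      = fun j : ℕ => k * (2 * c (↑(j + 1))) := by
    funext j
    simp only [hc, hk]
    have hD : x ^ 2 - (π * ((j:ℝ)+1)) ^ 2 ≠ 0 := by
      have := hden ((j:ℤ)+1)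
      push_cast at this
      exact this
    have hD' : (π * ((j:ℝ)+1))^2 - x^2 ≠ 0 := fun h => hD (by linarith)
    rw [show ((-1:ℝ)) ^ ((↑(j+1)):ℤ) = (-1:ℝ)^(j+1) from zpow_natCast (-1:ℝ) (j+1)]
    push_cast
    field_simp
    rw [← div_neg]; congr 1; ring
  have hval : (1 / 2) * (1 / x ^ 2 - 1 / (x * Real.sin x)) = k * (1 - c 0) := by
    rw [hc0, hk]
    field_simp
    ring
  rw [hfun, hval]
  exact H4
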